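/- If κ is an uncountable regular cardinal, then there exists a family of sets S(X) ⊆ κ indexed by subsets X ⊆ κ such that for any two distinct X, Y ⊆ κ, the symmetric difference S(X) Δ S(Y) is a stationary subset of κ. -/

import Mathlib

open Cardinal Set

/-- `C` is a club (closed unbounded) subset of the ordinal `γ`: it consists of ordinals
below `γ`, its supremum is `γ`, and it is closed under suprema of its nonempty subsets
whose supremum is below `γ`. -/
def IsClubIn (γ : Ordinal) (C : Set Ordinal) : Prop :=
  C ⊆ Set.Iio γ ∧ sSup C = γ ∧
    ∀ s ⊆ C, s.Nonempty → sSup s < γ → sSup s ∈ C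

/-- `S` is stationary in `γ`: it meets every club in `γ`. -/
def IsStatIn (γ : Ordinal) (S : Set Ordinal) : Prop :=
  ∀ C : Set Ordinal, IsClubIn γ C → (S ∩ C).Nonempty

namespace StatSandbox

variable {o : Ordinal} {C : Set Ordinal}

theorem club_unbounded (h : IsClubIn o C) {β : Ordinal} (hβ : β < o) :
    ∃ c ∈ C, β < c := by
  by_contra hc
  push_neg at hc
  rcases C.eq_empty_or_nonempty with rfl | hne
  · have h0 : o = (0 : Ordinal) := by simpa [csSup_empty] using h.2.1.symm
    exact absurd (h0 ▸ hβ) (by simp : ¬ β < 0)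
  · exact absurd h.2.1 (ne_of_lt (lt_of_le_of_lt (csSup_le hne hc) hβ))

theorem sup_eq_of_unbounded {A : Set Ordinal} (hsub : A ⊆ Set.Iio o)
    (h : ∀ β < o, ∃ a ∈ A, β < a) : sSup A = o := by
  refine le_antisymm (csSup_le' fun a ha => (hsub ha).le) (le_of_forall_lt fun β hβ => ?_)
  obtain ⟨a, haA, hb⟩ := h β hβ
  exact hb.trans_le (le_csSup ⟨o, fun x hx => (hsub hx).le⟩ haA)

theorem iSup_nat_lt (h0 : ℵ₀ < o.cof) {f : ℕ → Ordinal} (hf : ∀ n, f n < o) :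
    (⨆ n, f n) < o :=
  Ordinal.iSup_lt_ord_lift (by rwa [Cardinal.mk_nat, Cardinal.lift_aleph0]) hf

theorem exists_bound (hreg : ∀ a < o, a.card < o.cof) {a : Ordinal} (ha : a < o)
    (f : Ordinal → Ordinal) (hf : ∀ γ < a, f γ < o) : ∃ b < o, ∀ γ < a, f γ ≤ b := by
  set F : a.ToType → Ordinal := fun i => f ((Ordinal.ToType.mk (o := a)).symm i) with hF
  have hFlt : ∀ i, F i < o := fun i => hf _ ((Ordinal.ToType.mk (o := a)).symm i).2
  refine ⟨⨆ i, F i, Ordinal.iSup_lt_ord ?_ hFlt, fun γ hγ => ?_⟩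
  · rw [Cardinal.mk_toType]; exact hreg a ha
  · have hx : f γ = F ((Ordinal.ToType.mk (o := a)) ⟨γ, hγ⟩) := by simp [hF]
    rw [hx]
    exact le_ciSup Ordinal.bddAbove_of_small _

open Classical in
noncomputable def above (C : Set Ordinal) (β : Ordinal) : Ordinal :=
  if h : ∃ c ∈ C, β < c then h.choose else 0

theorem above_spec (h : IsClubIn o C) {β : Ordinal} (hβ : β < o) :
    above C β ∈ C ∧ β < above C β := by
  have hc := club_unbounded h hβ
  classical
  rw [above, dif_pos hc]
  exact ⟨hc.choose_spec.1, hc.choose_spec.2⟩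

theorem csSup_range_eq {x g : ℕ → Ordinal} (h1 : ∀ k, x k ≤ g k)
    (h2 : ∀ k, g k ≤ ⨆ j, x j) : sSup (Set.range g) = ⨆ j, x j :=
  le_antisymm (csSup_le (Set.range_nonempty g) (by rintro _ ⟨k, rfl⟩; exact h2 k))
    (ciSup_mono Ordinal.bddAbove_of_small h1)

theorem iSup_shift {x : ℕ → Ordinal} (hm : Monotone x) (k₀ : ℕ) :
    (⨆ j, x (k₀ + j)) = ⨆ j, x j :=
  le_antisymm (ciSup_le fun j => le_ciSup Ordinal.bddAbove_of_small (k₀ + j))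
    (ciSup_mono Ordinal.bddAbove_of_small fun j => hm (Nat.le_add_left j k₀))


theorem tower (h0 : ℵ₀ < o.cof) (C : ℕ → Set Ordinal) (hC : ∀ n, IsClubIn o (C n))
    {β₀ : Ordinal} (hβ : β₀ < o) :
    ∃ α, α < o ∧ β₀ < α ∧ (∀ n, α ∈ C n) ∧
      ∃ x : ℕ → Ordinal, (∀ k, x k < α) ∧ ∀ β < α, ∃ k, β ≤ x k := by
  have hlim : Order.IsSuccLimit o := Ordinal.aleph0_le_cof.1 h0.le
  set step : Ordinal → Ordinal := fun a => (⨆ n, above (C n) a) ⊔ Order.succ a with hstep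
  have hstep_spec : ∀ a < o, a < step a ∧ step a < o ∧ ∀ n, above (C n) a ≤ step a := by
    intro a ha
    refine ⟨lt_of_lt_of_le (Order.lt_succ a) le_sup_right,
      sup_lt_iff.2 ⟨iSup_nat_lt h0 fun n => (hC n).1 ((above_spec (hC n) ha).1), hlim.succ_lt ha⟩,
      fun n => by
        have hle := le_ciSup (f := fun n => above (C n) a) Ordinal.bddAbove_of_small n
        exact le_trans hle le_sup_left⟩
  set x : ℕ → Ordinal := fun k => Nat.rec β₀ (fun _ a => step a) k with hx
  have hxlt : ∀ k, x k < o := by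
    intro k; induction k with
    | zero => exact hβ
    | succ k ih => exact (hstep_spec _ ih).2.1
  have hxmono : ∀ k, x k < x (k + 1) := fun k => (hstep_spec _ (hxlt k)).1
  have hmono : Monotone x := monotone_nat_of_le_succ fun k => (hxmono k).le
  set α := ⨆ k, x k with hα
  have hαo : α < o := iSup_nat_lt h0 hxlt
  have hxα : ∀ k, x k < α := fun k =>
    (hxmono k).trans_le (le_ciSup Ordinal.bddAbove_of_small (k + 1))
  refine ⟨α, hαo, hxα 0, fun n => ?_, x, hxα, fun β hβα => ?_⟩
  · set g : ℕ → Ordinal := fun k => above (C n) (x k) with hg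
    have hsup : sSup (Set.range g) = α := by
      refine csSup_range_eq (fun k => (above_spec (hC n) (hxlt k)).2.le) (fun k => ?_)
      exact le_trans ((hstep_spec _ (hxlt k)).2.2 n) (le_ciSup Ordinal.bddAbove_of_small (k + 1))
    have := (hC n).2.2 (Set.range g) (by rintro _ ⟨k, rfl⟩; exact (above_spec (hC n) (hxlt k)).1)
      (Set.range_nonempty g) (by rw [hsup]; exact hαo)
    rwa [hsup] at this
  · obtain ⟨k, hk⟩ := (lt_ciSup_iff Ordinal.bddAbove_of_small).1 hβα
    exact ⟨k, hk.le⟩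

theorem club_iInter (h0 : ℵ₀ < o.cof) (C : ℕ → Set Ordinal) (hC : ∀ n, IsClubIn o (C n)) :
    IsClubIn o (⋂ n, C n) := by
  refine ⟨fun a ha => (hC 0).1 (Set.mem_iInter.1 ha 0),
    sup_eq_of_unbounded (fun a ha => (hC 0).1 (Set.mem_iInter.1 ha 0)) (fun β hβ => ?_),
    fun s hs hne hlt => Set.mem_iInter.2 fun n =>
      (hC n).2.2 s (hs.trans (Set.iInter_subset _ n)) hne hlt⟩
  obtain ⟨α, hαo, hβα, hmem, -⟩ := tower h0 C hC hβ
  exact ⟨α, Set.mem_iInter.2 hmem, hβα⟩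

theorem club_inter {D : Set Ordinal} (h0 : ℵ₀ < o.cof) (hCc : IsClubIn o C)
    (hDc : IsClubIn o D) : IsClubIn o (C ∩ D) := by
  have h := club_iInter h0 (fun n => if n = 0 then C else D)
    (fun n => by split <;> assumption)
  have he : (⋂ n : ℕ, if n = 0 then C else D) = C ∩ D := by
    ext a
    simp only [Set.mem_iInter, Set.mem_inter_iff]
    constructor
    · intro h; exact ⟨by simpa using h 0, by simpa using h 1⟩
    · rintro ⟨h1, h2⟩ n; split <;> assumption
  rwa [he] at h

theorem club_Iio (hlim : Order.IsSuccLimit o) : IsClubIn o (Set.Iio o) :=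
  ⟨subset_rfl, sup_eq_of_unbounded subset_rfl
      (fun β hβ => ⟨Order.succ β, hlim.succ_lt hβ, Order.lt_succ β⟩),
    fun _ _ _ hlt => hlt⟩

theorem club_Ioo (hlim : Order.IsSuccLimit o) {β : Ordinal} (hβ : β < o) :
    IsClubIn o (Set.Ioo β o) := by
  refine ⟨fun a ha => ha.2, sup_eq_of_unbounded (fun a ha => ha.2) (fun γ hγ => ?_),
    fun s hs hne hlt => ?_⟩
  · exact ⟨Order.succ (β ⊔ γ), ⟨lt_of_le_of_lt le_sup_left (Order.lt_succ _),
      hlim.succ_lt (sup_lt_iff.2 ⟨hβ, hγ⟩)⟩, lt_of_le_of_lt le_sup_right (Order.lt_succ _)⟩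
  · obtain ⟨a, ha⟩ := hne
    exact ⟨lt_of_lt_of_le (hs ha).1 (le_csSup ⟨o, fun y hy => (hs hy).2.le⟩ ha), hlt⟩

def Ladder (α : Ordinal) (g : ℕ → Ordinal) : Prop :=
  (∀ n, g n < α) ∧ ∀ β < α, ∃ n, β ≤ g n

def T (o : Ordinal) : Set Ordinal := {α | α < o ∧ ∃ g, Ladder α g}

theorem T_stat (h0 : ℵ₀ < o.cof) : IsStatIn o (T o) := by
  intro C hC
  have hlim : Order.IsSuccLimit o := Ordinal.aleph0_le_cof.1 h0.le
  obtain ⟨α, hαo, -, hmem, x, hx1, hx2⟩ :=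
    tower h0 (fun _ => C) (fun _ => hC) hlim.pos
  exact ⟨α, ⟨hαo, x, hx1, hx2⟩, hmem 0⟩

open Classical in
noncomputable def lad (o α : Ordinal) : ℕ → Ordinal :=
  if h : α ∈ T o then h.2.choose else fun _ => 0

theorem lad_spec {α : Ordinal} (h : α ∈ T o) : Ladder α (lad o α) := by
  classical
  rw [lad, dif_pos h]
  exact h.2.choose_spec

theorem club_diag (h0 : ℵ₀ < o.cof) (hreg : ∀ a < o, a.card < o.cof)
    (D : Ordinal → Set Ordinal) (hD : ∀ γ, IsClubIn o (D γ)) :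
    IsClubIn o {α | α < o ∧ ∀ γ < α, α ∈ D γ} := by
  have hlim : Order.IsSuccLimit o := Ordinal.aleph0_le_cof.1 h0.le
  refine ⟨fun α hα => hα.1, sup_eq_of_unbounded (fun α hα => hα.1) ?_, ?_⟩
  · -- unboundedness via a tower with stage-dependent width
    intro β₀ hβ₀
    have hstep : ∀ a, a < o → ∃ b, a < b ∧ b < o ∧ ∀ γ < a, above (D γ) a ≤ b := by
      intro a ha
      obtain ⟨b, hbo, hb⟩ := exists_bound hreg ha (fun γ => above (D γ) a)
        (fun γ _ => (hD γ).1 (above_spec (hD γ) ha).1)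
      exact ⟨b ⊔ Order.succ a, lt_of_lt_of_le (Order.lt_succ a) le_sup_right,
        sup_lt_iff.2 ⟨hbo, hlim.succ_lt ha⟩,
        fun γ hγ => le_trans (hb γ hγ) le_sup_left⟩
    set step : Ordinal → Ordinal := fun a => if h : a < o then (hstep a h).choose else 0
      with hstepdef
    have hstep_spec : ∀ a (h : a < o),
        a < step a ∧ step a < o ∧ ∀ γ < a, above (D γ) a ≤ step a := by
      intro a h
      simp only [hstepdef, dif_pos h]
      exact (hstep a h).choose_spec
    set x : ℕ → Ordinal := fun k => Nat.rec β₀ (fun _ a => step a) k with hx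
    have hxlt : ∀ k, x k < o := by
      intro k; induction k with
      | zero => exact hβ₀
      | succ k ih => exact (hstep_spec _ ih).2.1
    have hxmono : ∀ k, x k < x (k + 1) := fun k => (hstep_spec _ (hxlt k)).1
    have hmono : Monotone x := monotone_nat_of_le_succ fun k => (hxmono k).le
    set α := ⨆ k, x k with hα
    have hαo : α < o := iSup_nat_lt h0 hxlt
    have hxα : ∀ k, x k < α := fun k =>
      (hxmono k).trans_le (le_ciSup Ordinal.bddAbove_of_small (k + 1))
    refine ⟨α, ⟨hαo, fun γ hγ => ?_⟩, hxα 0⟩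
    obtain ⟨k₀, hk₀⟩ := (lt_ciSup_iff Ordinal.bddAbove_of_small).1 hγ
    have hγx : ∀ k, γ < x (k₀ + k) := fun k => hk₀.trans_le (hmono (Nat.le_add_right k₀ k))
    set g : ℕ → Ordinal := fun k => above (D γ) (x (k₀ + k)) with hg
    have hsup : sSup (Set.range g) = α := by
      have h1 : sSup (Set.range g) = ⨆ k, x (k₀ + k) := by
        refine csSup_range_eq (fun k => (above_spec (hD γ) (hxlt (k₀ + k))).2.le) (fun k => ?_)
        have := (hstep_spec _ (hxlt (k₀ + k))).2.2 γ (hγx k)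
        exact le_trans this
          (le_ciSup (f := fun j => x (k₀ + j)) Ordinal.bddAbove_of_small (k + 1))
      rw [h1, iSup_shift hmono k₀]
    have := (hD γ).2.2 (Set.range g)
      (by rintro _ ⟨k, rfl⟩; exact (above_spec (hD γ) (hxlt (k₀ + k))).1)
      (Set.range_nonempty g) (by rw [hsup]; exact hαo)
    rwa [hsup] at this
  · -- closedness
    intro s hs hne hlt
    refine ⟨hlt, fun γ hγ => ?_⟩
    set s' := {y ∈ s | γ < y} with hs'
    have hne' : s'.Nonempty := by
      by_contra hc
      rw [Set.not_nonempty_iff_eq_empty] at hc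
      have hall : ∀ y ∈ s, y ≤ γ := by
        intro y hy
        by_contra hyc
        exact Set.eq_empty_iff_forall_notMem.1 hc y ⟨hy, lt_of_not_ge hyc⟩
      exact absurd (csSup_le hne hall) (not_le.2 hγ)
    have hbdd : BddAbove s := ⟨o, fun y hy => ((hs hy).1).le⟩
    have hsup' : sSup s' = sSup s := by
      refine le_antisymm (csSup_le hne' fun y hy => le_csSup hbdd hy.1)
        (csSup_le hne fun y hy => ?_)
      obtain ⟨z, hz⟩ := hne'
      rcases le_or_gt y γ with h | h
      · exact le_trans (h.trans hz.2.le) (le_csSup (hbdd.mono (Set.sep_subset s _)) hz)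
      · exact le_csSup (hbdd.mono (Set.sep_subset s _)) ⟨hy, h⟩
    have := (hD γ).2.2 s' (fun y hy => (hs hy.1).2 γ hy.2) hne' (by rw [hsup']; exact hlt)
    rwa [hsup'] at this

theorem exists_n (h0 : ℵ₀ < o.cof) :
    ∃ n : ℕ, ∀ β < o, IsStatIn o {α ∈ T o | β ≤ lad o α n} := by
  have hlim : Order.IsSuccLimit o := Ordinal.aleph0_le_cof.1 h0.le
  by_contra hcon
  push_neg at hcon
  have hcon' : ∀ n : ℕ, ∃ β, β < o ∧ ∃ Cl, IsClubIn o Cl ∧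
      ({α ∈ T o | β ≤ lad o α n} ∩ Cl) = ∅ := by
    intro n
    obtain ⟨β, hβ, hns⟩ := hcon n
    rw [IsStatIn] at hns
    push_neg at hns
    obtain ⟨Cl, hCl, hne⟩ := hns
    exact ⟨β, hβ, Cl, hCl, hne⟩
  choose β hβo Cl hCl hempty using hcon'
  set β' := ⨆ n, β n with hβ'
  have hβ'o : β' < o := iSup_nat_lt h0 hβo
  have hclub : IsClubIn o ((⋂ n, Cl n) ∩ Set.Ioo β' o) :=
    club_inter h0 (club_iInter h0 Cl hCl) (club_Ioo hlim hβ'o)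
  obtain ⟨α, hαT, hαC⟩ := T_stat h0 _ hclub
  obtain ⟨n, hn⟩ := (lad_spec hαT).2 β' hαC.2.1
  exact Set.eq_empty_iff_forall_notMem.1 (hempty n) α
    ⟨⟨hαT, le_trans (le_ciSup Ordinal.bddAbove_of_small n) hn⟩, Set.mem_iInter.1 hαC.1 n⟩

theorem fiber_stat (h0 : ℵ₀ < o.cof) (hreg : ∀ a < o, a.card < o.cof)
    (F : Ordinal → Ordinal) (hFreg : ∀ α ∈ T o, F α < α)
    (hstat : ∀ β < o, IsStatIn o {α ∈ T o | β ≤ F α}) :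
    ∀ β < o, ∃ γ, β ≤ γ ∧ IsStatIn o {α ∈ T o | F α = γ} := by
  have hlim : Order.IsSuccLimit o := Ordinal.aleph0_le_cof.1 h0.le
  intro β hβ
  by_contra hcon
  push_neg at hcon
  have hex : ∀ γ, ∃ D, IsClubIn o D ∧ (β ≤ γ → ∀ α ∈ T o, F α = γ → α ∉ D) := by
    intro γ
    by_cases hγ : β ≤ γ
    · have h1 := hcon γ hγ
      rw [IsStatIn] at h1
      push_neg at h1
      obtain ⟨D, hD, hne⟩ := h1
      exact ⟨D, hD, fun _ α hαT hFα hαD =>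
        Set.eq_empty_iff_forall_notMem.1 hne α ⟨⟨hαT, hFα⟩, hαD⟩⟩
    · exact ⟨Set.Iio o, club_Iio hlim, fun h => absurd h hγ⟩
  choose D hDclub hDspec using hex
  obtain ⟨α, hαmem, hαΔ⟩ := hstat β hβ _ (club_diag h0 hreg D hDclub)
  exact hDspec (F α) hαmem.2 α hαmem.1 rfl (hαΔ.2 _ (hFreg α hαmem.1))

theorem stat_mono {S1 S2 : Set Ordinal} (h : S1 ⊆ S2) (hs : IsStatIn o S1) :
    IsStatIn o S2 := fun C hC =>
  let ⟨a, h1, h2⟩ := hs C hC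
  ⟨a, h h1, h2⟩

end StatSandbox

open StatSandbox in
theorem stmt1' (κ : Cardinal) (hreg : κ.IsRegular) (hunc : ℵ₀ < κ) :
    ∃ S : Set Ordinal → Set Ordinal,
      (∀ X, X ⊆ Set.Iio κ.ord → S X ⊆ Set.Iio κ.ord) ∧
      ∀ X Y, X ⊆ Set.Iio κ.ord → Y ⊆ Set.Iio κ.ord → X ≠ Y →
        IsStatIn κ.ord (symmDiff (S X) (S Y)) := by
  classical
  set o := κ.ord with ho
  have hcof : o.cof = κ := hreg.cof_eq
  have h0 : ℵ₀ < o.cof := by rw [hcof]; exact hunc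
  have hregc : ∀ a < o, a.card < o.cof := fun a ha => by
    rw [hcof]; exact Cardinal.lt_ord.1 ha
  have hlim : Order.IsSuccLimit o := Cardinal.isSuccLimit_ord hreg.1
  obtain ⟨n, hn⟩ := exists_n (o := o) h0
  set F : Ordinal → Ordinal := fun α => lad o α n with hF
  have hFreg : ∀ α ∈ T o, F α < α := fun α hα => (lad_spec hα).1 n
  set G : Set Ordinal := {γ | IsStatIn o {α ∈ T o | F α = γ}} with hG
  have hGsub : ∀ γ ∈ G, γ < o := by
    intro γ hγ
    obtain ⟨α, hα, hαo⟩ := hγ (Set.Iio o) (club_Iio hlim)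
    exact hα.2 ▸ lt_trans (hFreg α hα.1) hαo
  have hGunb : ∀ β < o, ∃ γ ∈ G, β < γ := by
    intro β hβ
    obtain ⟨γ, hγge, hγstat⟩ :=
      fiber_stat h0 hregc F hFreg hn (Order.succ β) (hlim.succ_lt hβ)
    exact ⟨γ, hγstat, lt_of_lt_of_le (Order.lt_succ β) hγge⟩
  set j : Ordinal → Ordinal :=
    Ordinal.lt_wf.fix (fun β IH => sInf {γ | γ ∈ G ∧ ∀ β' (h : β' < β), IH β' h < γ})
    with hj
  have hjeq : ∀ β, j β = sInf {γ | γ ∈ G ∧ ∀ β' < β, j β' < γ} := by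
    intro β
    rw [hj, WellFounded.fix_eq]
  have hjmem : ∀ β, β < o → j β ∈ G ∧ ∀ β' < β, j β' < j β := by
    intro β
    induction β using Ordinal.induction with
    | h β IH =>
      intro hβ
      have hne : {γ | γ ∈ G ∧ ∀ β' < β, j β' < γ}.Nonempty := by
        obtain ⟨b, hbo, hb⟩ := exists_bound hregc hβ j
          (fun β' hβ' => hGsub _ ((IH β' hβ' (hβ'.trans hβ)).1))
        obtain ⟨γ, hγG, hγgt⟩ := hGunb b hbo
        exact ⟨γ, hγG, fun β' hβ' => lt_of_le_of_lt (hb β' hβ') hγgt⟩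
      have hmem := csInf_mem hne
      rw [← hjeq β] at hmem
      exact ⟨hmem.1, hmem.2⟩
  have hjinj : ∀ β₁, β₁ < o → ∀ β₂, β₂ < o → j β₁ = j β₂ → β₁ = β₂ := by
    intro β₁ h₁ β₂ h₂ he
    rcases lt_trichotomy β₁ β₂ with h | h | h
    · exact absurd he (ne_of_lt ((hjmem β₂ h₂).2 β₁ h))
    · exact h
    · exact absurd he.symm (ne_of_lt ((hjmem β₁ h₁).2 β₂ h))
  have hZstat : ∀ δ, δ < o → IsStatIn o {α ∈ T o | F α = j δ} :=
    fun δ hδ => (hjmem δ hδ).1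
  refine ⟨fun X => {α | α ∈ T o ∧ ∃ γ ∈ X, γ < o ∧ F α = j γ}, ?_, ?_⟩
  · intro X _ α hα
    exact hα.1.1
  · intro X Y hX hY hXY
    have hdiff : ∃ γ, (γ ∈ X ∧ γ ∉ Y) ∨ (γ ∈ Y ∧ γ ∉ X) := by
      by_contra hcon
      push_neg at hcon
      apply hXY
      ext γ
      have := hcon γ
      tauto
    obtain ⟨γ, hcase⟩ := hdiff
    rcases hcase with ⟨hγX, hγY⟩ | ⟨hγY, hγX⟩
    · have hγo : γ < o := hX hγX
      refine stat_mono ?_ (hZstat γ hγo)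
      rintro α ⟨hαT, hFα⟩
      rw [Set.symmDiff_def]
      refine Set.mem_union_left _ ⟨⟨hαT, γ, hγX, hγo, hFα⟩, ?_⟩
      rintro ⟨-, γ', hγ'Y, hγ'o, hFα'⟩
      exact hγY ((hjinj γ' hγ'o γ hγo (hFα'.symm.trans hFα)) ▸ hγ'Y)
    · have hγo : γ < o := hY hγY
      refine stat_mono ?_ (hZstat γ hγo)
      rintro α ⟨hαT, hFα⟩
      rw [Set.symmDiff_def]
      refine Set.mem_union_right _ ⟨⟨hαT, γ, hγY, hγo, hFα⟩, ?_⟩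
      rintro ⟨-, γ', hγ'X, hγ'o, hFα'⟩
      exact hγX ((hjinj γ' hγ'o γ hγo (hFα'.symm.trans hFα)) ▸ hγ'X)




/-- For an uncountable regular cardinal `κ` there is a family `S X ⊆ κ` indexed by
subsets `X ⊆ κ` such that the symmetric difference `S X ∆ S Y` is stationary in `κ`
whenever `X ≠ Y`. -/
theorem stmt1 (κ : Cardinal) (hreg : κ.IsRegular) (hunc : ℵ₀ < κ) :
    ∃ S : Set Ordinal → Set Ordinal,
      (∀ X, X ⊆ Set.Iio κ.ord → S X ⊆ Set.Iio κ.ord) ∧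
      ∀ X Y, X ⊆ Set.Iio κ.ord → Y ⊆ Set.Iio κ.ord → X ≠ Y →
        IsStatIn κ.ord (symmDiff (S X) (S Y)) := by
  exact stmt1' κ hreg hunc
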